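/- Let H be a Hilbert space, C : H → H bounded, u, ū ∈ H with ‖u − ū‖ ≤ ε‖ū‖ and C ū ≠ 0. For z ∈ span{C u}^⊥, let z₀ = P_{span{C ū}^⊥}(z) be its orthogonal projection onto span{C ū}^⊥. Then ‖z − z₀‖ ≤ (‖ū‖‖C‖/‖C ū‖) · ε · ‖z‖. -/

import Mathlib

open RealInnerProductSpace


/-- Inequality (zw2): for `z ⊥ Cu` with `‖u - ū‖ ≤ ε‖ū‖`, the orthogonal
projection `z₀` of `z` onto `span{Cū}ᗮ` satisfies
`‖z - z₀‖ ≤ (‖ū‖‖C‖/‖Cū‖) ε ‖z‖`. -/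
theorem perturbed_orthogonal_complement_bound
    {H : Type*} [NormedAddCommGroup H] [InnerProductSpace ℝ H] [CompleteSpace H]
    (C : H →L[ℝ] H) (u ub : H) (ε : ℝ)
    (hclose : ‖u - ub‖ ≤ ε * ‖ub‖) (hCub : C ub ≠ 0)
    (z : H) (hz : z ∈ (ℝ ∙ (C u))ᗮ) :
    ‖z - (Submodule.orthogonalProjection (ℝ ∙ (C ub))ᗮ z : H)‖ ≤ (‖ub‖ * ‖C‖ / ‖C ub‖) * ε * ‖z‖ := by
  have hdecomp :
      z - (Submodule.orthogonalProjection (ℝ ∙ (C ub))ᗮ z : H)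
        = (Submodule.orthogonalProjection (ℝ ∙ (C ub)) z : H) := by
    have := Submodule.starProjection_add_starProjection_orthogonal (K := ℝ ∙ (C ub)) z
    rw [sub_eq_iff_eq_add]; exact this.symm
  rw [hdecomp, ← Submodule.starProjection_apply, Submodule.starProjection_singleton]
  have hCubn : (0:ℝ) < ‖C ub‖ := norm_pos_iff.mpr hCub
  have hzCu : ⟪C u, z⟫ = 0 := hz (C u) (Submodule.mem_span_singleton_self _)
  have key : |⟪C ub, z⟫| ≤ ‖C‖ * (ε * ‖ub‖) * ‖z‖ := by
    have heq : ⟪C ub, z⟫ = ⟪C ub - C u, z⟫ := by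
      rw [inner_sub_left, hzCu]; ring
    rw [heq]
    calc |⟪C ub - C u, z⟫| ≤ ‖C ub - C u‖ * ‖z‖ := abs_real_inner_le_norm _ _
      _ ≤ (‖C‖ * (ε * ‖ub‖)) * ‖z‖ := by
          gcongr
          calc ‖C ub - C u‖ = ‖C (ub - u)‖ := by rw [map_sub]
            _ ≤ ‖C‖ * ‖ub - u‖ := C.le_opNorm _
            _ ≤ ‖C‖ * (ε * ‖ub‖) := by
                gcongr; rwa [norm_sub_rev] at hclose
  rw [norm_smul]
  have hn : ‖(⟪C ub, z⟫ / ((‖C ub‖:ℝ)^2) : ℝ)‖ * ‖C ub‖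
      = |⟪C ub, z⟫| / ‖C ub‖ := by
    rw [Real.norm_eq_abs, abs_div, abs_of_nonneg (by positivity : (0:ℝ) ≤ ‖C ub‖^2)]
    field_simp
  simp only [RCLike.ofReal_real_eq_id, id_eq]
  rw [hn, div_le_iff₀ hCubn]
  calc |⟪C ub, z⟫| ≤ ‖C‖ * (ε * ‖ub‖) * ‖z‖ := key
    _ = ‖ub‖ * ‖C‖ / ‖C ub‖ * ε * ‖z‖ * ‖C ub‖ := by field_simp
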